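/- Under the hypotheses of the Rellich identity (D₀ self-adjoint with closed range, N a self-adjoint involution anticommuting with D₀, B̃ bounded, accretive on Ran(D₀), with B̃* = NB̃N, D₀B̃ bisectorial with bounded H^∞ calculus on H₀ = Ran(D₀)): writing each h ∈ H₀ as h = (h_⊥, h_∥) with h_⊥ = N⁻h = (I−N)h/2 and h_∥ = N⁺h = (I+N)h/2, every h ∈ χ^±(D₀B̃)H₀ satisfies ‖h‖ ≲ ‖h_⊥‖ and ‖h‖ ≲ ‖h_∥‖. -/

import Mathlib

open MeasureTheory Set
noncomputable section

/-- Under the hypotheses of the Rellich identity (`N` a bounded self-adjoint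
involution, `B̃` bounded, accretivity `Re⟨B̃h,h⟩ ≥ κ‖h‖²` at `h`, and the Rellich identity
`⟨Nh, B̃h⟩ = 0`, which holds for every `h ∈ χ^±(D₀B̃)H₀`), writing `h_⊥ = (I−N)h/2` and
`h_∥ = (I+N)h/2`, one has `‖h‖ ≲ ‖h_⊥‖` and `‖h‖ ≲ ‖h_∥‖`, explicitly
`κ‖h‖ ≤ 2‖B̃‖‖h_⊥‖` and `κ‖h‖ ≤ 2‖B̃‖‖h_∥‖`. -/
theorem rellich_norm_bounds
    {H : Type*} [NormedAddCommGroup H] [InnerProductSpace ℂ H] [CompleteSpace H]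
    (Nop : H →L[ℂ] H)
    (hNinv : Nop.comp Nop = ContinuousLinearMap.id ℂ H)
    (hNsa : ∀ x y : H, (inner ℂ (Nop x) y : ℂ) = inner ℂ x (Nop y))
    (B : H →L[ℂ] H) (κ : ℝ) (hκ : 0 < κ)
    (h : H)
    (hacc : κ * ‖h‖ ^ 2 ≤ (inner ℂ (B h) h : ℂ).re)
    (hrellich : (inner ℂ (Nop h) (B h) : ℂ) = 0) :
    κ * ‖h‖ ≤ 2 * ‖B‖ * ‖(2 : ℝ)⁻¹ • (h - Nop h)‖ ∧
    κ * ‖h‖ ≤ 2 * ‖B‖ * ‖(2 : ℝ)⁻¹ • (h + Nop h)‖ := by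
  set p : H := (2 : ℝ)⁻¹ • (h - Nop h) with hp
  set q : H := (2 : ℝ)⁻¹ • (h + Nop h) with hq
  have hsum : p + q = h := by
    rw [hp, hq, ← smul_add]
    have : h - Nop h + (h + Nop h) = (2 : ℝ) • h := by
      rw [two_smul]; abel
    rw [this, smul_smul]
    norm_num
  have hdiff : q - p = Nop h := by
    rw [hp, hq, ← smul_sub]
    have : h + Nop h - (h - Nop h) = (2 : ℝ) • Nop h := by
      rw [two_smul]; abel
    rw [this, smul_smul]
    norm_num
  have hre : (inner ℂ (B h) h : ℂ).re = (inner ℂ h (B h) : ℂ).re := by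
    rw [← inner_conj_symm h (B h)]
    exact Complex.conj_re _
  have hsplit : (inner ℂ h (B h) : ℂ).re = (inner ℂ p (B h) : ℂ).re + (inner ℂ q (B h) : ℂ).re := by
    rw [← hsum, inner_add_left]
    simp [inner_add_right]
  have heq : (inner ℂ q (B h) : ℂ).re - (inner ℂ p (B h) : ℂ).re = 0 := by
    have := congrArg Complex.re hrellich
    rw [← hdiff, inner_sub_left] at this
    simpa using this
  have key : ∀ x : H, κ * ‖h‖ ^ 2 ≤ 2 * (inner ℂ x (B h) : ℂ).re →
      κ * ‖h‖ ≤ 2 * ‖B‖ * ‖x‖ := by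
    intro x hx
    have hcs : (inner ℂ x (B h) : ℂ).re ≤ ‖x‖ * ‖B h‖ := by simpa using re_inner_le_norm (𝕜 := ℂ) x (B h)
    have hBh : ‖B h‖ ≤ ‖B‖ * ‖h‖ := B.le_opNorm h
    rcases eq_or_lt_of_le (norm_nonneg h) with h0 | h0
    · rw [← h0, mul_zero]
      positivity
    · have chain : κ * ‖h‖ ^ 2 ≤ (2 * ‖B‖ * ‖x‖) * ‖h‖ := by
        calc κ * ‖h‖ ^ 2 ≤ 2 * (inner ℂ x (B h) : ℂ).re := hx
          _ ≤ 2 * (‖x‖ * ‖B h‖) := by linarith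
          _ ≤ 2 * (‖x‖ * (‖B‖ * ‖h‖)) := by
              have := mul_le_mul_of_nonneg_left hBh (norm_nonneg x)
              linarith
          _ = (2 * ‖B‖ * ‖x‖) * ‖h‖ := by ring
      have : κ * ‖h‖ * ‖h‖ ≤ (2 * ‖B‖ * ‖x‖) * ‖h‖ := by
        nlinarith [sq_nonneg ‖h‖]
      exact le_of_mul_le_mul_right this h0
  have hmain : κ * ‖h‖ ^ 2 ≤ (inner ℂ h (B h) : ℂ).re := hre ▸ hacc
  constructor
  · exact key p (by rw [hsplit] at hmain; linarith)
  · exact key q (by rw [hsplit] at hmain; linarith)
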